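/- Let (R, m) be a commutative Noetherian local ring and let M and N be finitely generated R-modules with h = pd_R(N) < ∞. If Ext^i_R(M, R) = 0 for all 1 ≤ i ≤ s + h + 1 for some integer s ≥ 0, then Ext^i_R(M, N) = 0 for all 1 ≤ i ≤ s + 1. -/

import Mathlib

open CategoryTheory IsLocalRing RingTheory.Sequence

/-- The Ext group `Ext^i_R(M, N)` as an `R`-module. -/
noncomputable def extMod (R : Type) [CommRing R] (M N : ModuleCat R) (i : ℕ) : ModuleCat R :=
  ((_root_.Ext R (ModuleCat R) i).obj (Opposite.op M)).obj N

/-- The depth of a module over a Noetherian local ring: the supremum of the lengths of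
regular sequences on `M` consisting of elements of the maximal ideal.  (We use weakly
regular sequences so that the zero module has depth `⊤`; for finitely generated nonzero
modules this is the length of a maximal `M`-regular sequence in the maximal ideal.) -/
noncomputable def rdepth (R : Type) [CommRing R] [IsLocalRing R]
    (M : Type) [AddCommGroup M] [Module R M] : ℕ∞ :=
  sSup {n : ℕ∞ | ∃ rs : List R, (rs.length : ℕ∞) = n ∧
    (∀ x ∈ rs, x ∈ maximalIdeal R) ∧ IsWeaklyRegular M rs}

/-- The projective dimension of a module, characterized via vanishing of Ext:
`pdim R N` is the least `m : ℕ` such that `Ext^i_R(N, X) = 0` for all `i > m` and all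
modules `X`, and `⊤` if no such `m` exists. -/
noncomputable def pdim (R : Type) [CommRing R] (N : ModuleCat R) : ℕ∞ :=
  sInf {n : ℕ∞ | ∃ m : ℕ, n = (m : ℕ∞) ∧
    ∀ i : ℕ, m < i → ∀ X : ModuleCat R, Subsingleton (extMod R N X i)}

/-- The injective dimension of a module, characterized via vanishing of Ext:
`idim R N` is the least `m : ℕ` such that `Ext^i_R(X, N) = 0` for all `i > m` and all
modules `X`, and `⊤` if no such `m` exists. -/
noncomputable def idim (R : Type) [CommRing R] (N : ModuleCat R) : ℕ∞ :=
  sInf {n : ℕ∞ | ∃ m : ℕ, n = (m : ℕ∞) ∧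
    ∀ i : ℕ, m < i → ∀ X : ModuleCat R, Subsingleton (extMod R X N i)}

namespace StmtAux
open CategoryTheory Limits

variable {R : Type} [CommRing R]

lemma subsingleton_of_isZero {X : ModuleCat R} (h : IsZero X) : Subsingleton X := by
  refine ⟨fun a b => ?_⟩
  have h1 := h.eq_of_src (𝟙 X) 0
  have : ∀ x : X, x = 0 := fun x => by
    conv_lhs => rw [show x = (𝟙 X) x from rfl, h1]
    rfl
  rw [this a, this b]

lemma extIso_subsingleton_iff {M Y : ModuleCat R} (P : ProjectiveResolution M) (i : ℕ) :
    Subsingleton (extMod R M Y i) ↔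
      IsZero ((P.complex.linearYonedaObj R Y).homology i) := by
  constructor
  · intro h
    exact (ModuleCat.isZero_of_subsingleton (extMod R M Y i)).of_iso (P.isoExt i Y).symm
  · intro h
    exact subsingleton_of_isZero (h.of_iso (P.isoExt i Y))

/-- Functoriality of the Yoneda complex in the second variable. -/
noncomputable def yMap (P : ChainComplex (ModuleCat R) ℕ) {A B : ModuleCat R} (φ : A ⟶ B) :
    P.linearYonedaObj R A ⟶ P.linearYonedaObj R B where
  f i := ModuleCat.ofHom (Linear.rightComp R (P.X i) φ)
  comm' i j _ := by
    ext (u : P.X i ⟶ A)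
    show (P.d j i ≫ u) ≫ φ = P.d j i ≫ (u ≫ φ)
    simp

/-- The complexwise short exact sequence of Yoneda complexes. -/
noncomputable def ySES (P : ChainComplex (ModuleCat R) ℕ) (S : ShortComplex (ModuleCat R)) :
    ShortComplex (CochainComplex (ModuleCat R) ℕ) :=
  ShortComplex.mk (yMap P S.f) (yMap P S.g) (by
    ext i (u : P.X i ⟶ S.X₁)
    show (u ≫ S.f) ≫ S.g = _
    rw [Category.assoc, S.zero, Limits.comp_zero]
    rfl)

lemma ySES_shortExact (P : ChainComplex (ModuleCat R) ℕ) [∀ n, Projective (P.X n)]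
    {S : ShortComplex (ModuleCat R)} (hS : S.ShortExact) : (ySES P S).ShortExact := by
  rw [HomologicalComplex.shortExact_iff_degreewise_shortExact]
  intro i
  haveI := hS.mono_f
  haveI := hS.epi_g
  haveI : Mono ((ySES P S).map (HomologicalComplex.eval _ _ i)).f := by
    rw [ModuleCat.mono_iff_injective]
    intro u v huv
    have : (u : P.X i ⟶ S.X₁) ≫ S.f = (v : P.X i ⟶ S.X₁) ≫ S.f := huv
    exact (cancel_mono S.f).mp this
  haveI : Epi ((ySES P S).map (HomologicalComplex.eval _ _ i)).g := by
    rw [ModuleCat.epi_iff_surjective]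
    intro w
    obtain ⟨w', hw'⟩ := Projective.factors (w : P.X i ⟶ S.X₃) S.g
    exact ⟨w', hw'⟩
  refine ⟨?_⟩
  rw [ShortComplex.moduleCat_exact_iff]
  intro u hu
  have hu' : (u : P.X i ⟶ S.X₂) ≫ S.g = 0 := hu
  exact ⟨hS.exact.lift u hu', hS.exact.lift_f u hu'⟩

lemma ext_les₃ (M : ModuleCat R) {S : ShortComplex (ModuleCat R)} (hS : S.ShortExact) (i : ℕ)
    (h₂ : Subsingleton (extMod R M S.X₂ i)) (h₁ : Subsingleton (extMod R M S.X₁ (i + 1))) :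
    Subsingleton (extMod R M S.X₃ i) := by
  obtain ⟨P⟩ : Nonempty (ProjectiveResolution M) := HasProjectiveResolution.out
  have hT := ySES_shortExact P.complex hS
  have e3 := hT.homology_exact₃ i (i + 1) rfl
  rw [extIso_subsingleton_iff P]
  exact e3.isZero_X₂
    (((extIso_subsingleton_iff P i).mp h₂).eq_of_src _ _)
    (((extIso_subsingleton_iff P (i + 1)).mp h₁).eq_of_tgt _ _)

lemma ext_les₂ (M : ModuleCat R) {S : ShortComplex (ModuleCat R)} (hS : S.ShortExact) (i : ℕ)
    (h₁ : Subsingleton (extMod R M S.X₁ i)) (h₃ : Subsingleton (extMod R M S.X₃ i)) :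
    Subsingleton (extMod R M S.X₂ i) := by
  obtain ⟨P⟩ : Nonempty (ProjectiveResolution M) := HasProjectiveResolution.out
  have hT := ySES_shortExact P.complex hS
  have e2 := hT.homology_exact₂ i
  rw [extIso_subsingleton_iff P]
  exact e2.isZero_X₂
    (((extIso_subsingleton_iff P i).mp h₁).eq_of_src _ _)
    (((extIso_subsingleton_iff P i).mp h₃).eq_of_tgt _ _)

lemma ext_shift {S : ShortComplex (ModuleCat R)} (hS : S.ShortExact) [Projective S.X₂]
    (i : ℕ) (X : ModuleCat R) (h : Subsingleton (extMod R S.X₃ X (i + 2))) :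
    Subsingleton (extMod R S.X₁ X (i + 1)) := by
  haveI := hS.mono_f
  haveI := hS.epi_g
  obtain ⟨Q⟩ : Nonempty (ProjectiveResolution S.X₁) := HasProjectiveResolution.out
  -- the augmented complex
  let π₀ : Q.complex.X 0 ⟶ S.X₁ := Q.π.f 0
  have hπ₀ : Q.complex.d 1 0 ≫ π₀ = 0 := Q.complex_d_comp_π_f_zero
  haveI : Epi π₀ := by
    have := epi_of_isColimit_cofork Q.isColimitCokernelCofork
    exact this
  let g0 : Q.complex.X 0 ⟶ S.X₂ := π₀ ≫ S.f
  have w : Q.complex.d 1 0 ≫ g0 = 0 := by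
    rw [show g0 = π₀ ≫ S.f from rfl, ← Category.assoc, hπ₀, Limits.zero_comp]
  let P' : ChainComplex (ModuleCat R) ℕ := Q.complex.augment g0 w
  haveI hproj : ∀ n, Projective (P'.X n) := by
    rintro (_ | n)
    · exact (inferInstance : Projective S.X₂)
    · exact Q.projective n
  have hd10 : P'.d 1 0 = g0 := rfl
  -- the augmentation map
  have hg0g : P'.d 1 0 ≫ S.g = 0 := by
    show (π₀ ≫ S.f) ≫ S.g = 0
    rw [Category.assoc, S.zero, Limits.comp_zero]
  let π' : P' ⟶ (ChainComplex.single₀ (ModuleCat R)).obj S.X₃ :=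
    (ChainComplex.toSingle₀Equiv P' S.X₃).symm ⟨S.g, hg0g⟩
  have hπ'0 : π'.f 0 = S.g := ChainComplex.toSingle₀Equiv_symm_apply_f_zero _ _
  -- exactness of the augmented complex in positive degrees
  have hexact1 : P'.ExactAt 1 := by
    rw [HomologicalComplex.exactAt_iff' P' 2 1 0 (by simp) (by simp),
      ShortComplex.moduleCat_exact_iff]
    intro x hx
    have hfinj := (ModuleCat.mono_iff_injective S.f).mp inferInstance
    have h0 : π₀ x = 0 := by
      apply hfinj
      have : g0 x = 0 := hx
      rw [map_zero]; exact this
    obtain ⟨y, hy⟩ := (ShortComplex.moduleCat_exact_iff _).mp Q.exact₀ x h0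
    exact ⟨y, hy⟩
  have hexactsucc : ∀ n : ℕ, P'.ExactAt (n + 2) := by
    intro n
    rw [HomologicalComplex.exactAt_iff' P' (n + 3) (n + 2) (n + 1) (by simp) (by simp)]
    have hQ := Q.complex_exactAt_succ n
    rw [HomologicalComplex.exactAt_iff' Q.complex (n + 2) (n + 1) n (by simp) (by simp)] at hQ
    refine (ShortComplex.exact_iff_of_iso ?_).mp hQ
    exact ShortComplex.isoMk (Iso.refl _) (Iso.refl _) (Iso.refl _)
      (by simp [P', HomologicalComplex.sc']; rfl) (by simp [P', HomologicalComplex.sc']; rfl)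
  -- π' is a quasi-isomorphism
  haveI hq : QuasiIso π' := by
    refine ⟨fun n => ?_⟩
    cases n with
    | zero =>
      rw [ChainComplex.quasiIsoAt₀_iff, ShortComplex.quasiIso_iff_of_zeros']
      · have hzero : g0 ≫ S.g = 0 := by
          rw [show g0 = π₀ ≫ S.f from rfl, Category.assoc, S.zero, Limits.comp_zero]
        have hex : (ShortComplex.mk g0 S.g hzero).Exact := by
          rw [ShortComplex.moduleCat_exact_iff]
          intro x hx
          have hx' : S.g x = 0 := hx
          obtain ⟨k, hk⟩ := (ShortComplex.moduleCat_exact_iff _).mp hS.exact x hx'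
          obtain ⟨q, hq⟩ := (ModuleCat.epi_iff_surjective π₀).mp inferInstance k
          refine ⟨q, ?_⟩
          show S.f (π₀ q) = x
          rw [hq, hk]
        refine (ShortComplex.exact_and_epi_g_iff_of_iso
          (S₂ := ShortComplex.mk g0 S.g hzero) ?_).2 ⟨hex, inferInstance⟩
        exact ShortComplex.isoMk (Iso.refl _) (Iso.refl _) (Iso.refl _)
          (by simp only [HomologicalComplex.sc']; simp; rw [hd10]; rfl) (by simp [hπ'0, HomologicalComplex.sc']; rfl)
      all_goals rfl
    | succ n =>
      rw [quasiIsoAt_iff_exactAt']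
      · cases n with
        | zero => exact hexact1
        | succ n => exact hexactsucc n
      · apply ChainComplex.exactAt_succ_single_obj
  -- assemble the projective resolution of S.X₃
  let Pres : ProjectiveResolution S.X₃ :=
    { complex := P', projective := hproj, π := π', quasiIso := hq }
  -- subsingleton transfer through the degree shift
  rw [extIso_subsingleton_iff Q (i + 1), ← HomologicalComplex.exactAt_iff_isZero_homology]
  rw [extIso_subsingleton_iff Pres (i + 2), ← HomologicalComplex.exactAt_iff_isZero_homology] at h
  rw [HomologicalComplex.exactAt_iff' _ (i + 1) (i + 2) (i + 3) (by simp) (by simp)] at h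
  rw [HomologicalComplex.exactAt_iff' _ i (i + 1) (i + 2) (by simp) (by simp)]
  refine (ShortComplex.exact_iff_of_iso ?_).mp h
  refine ShortComplex.isoMk (Iso.refl _) (Iso.refl _) (Iso.refl _) ?_ ?_
  · ext (u : P'.X (i + 1) ⟶ X)
    show (P'.d (i + 2) (i + 1)) ≫ u = (Q.complex.d (i + 1) i) ≫ u
    rw [ChainComplex.augment_d_succ_succ]
    rfl
  · ext (u : P'.X (i + 2) ⟶ X)
    show (P'.d (i + 3) (i + 2)) ≫ u = (Q.complex.d (i + 2) (i + 1)) ≫ u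
    rw [ChainComplex.augment_d_succ_succ]
    rfl

lemma projective_of_ext_one (N : ModuleCat R)
    (hv : ∀ X : ModuleCat R, Subsingleton (extMod R N X 1)) : Projective N := by
  obtain ⟨P⟩ : Nonempty (ProjectiveResolution N) := HasProjectiveResolution.out
  let p : P.complex.X 0 ⟶ N := P.π.f 0
  have hdp : P.complex.d 1 0 ≫ p = 0 := P.complex_d_comp_π_f_zero
  haveI hepi : Epi p := by
    have := epi_of_isColimit_cofork P.isColimitCokernelCofork
    exact this
  let K := kernel p
  let ι : K ⟶ P.complex.X 0 := kernel.ι p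
  let u : P.complex.X 1 ⟶ K := kernel.lift p (P.complex.d 1 0) hdp
  have hu : u ≫ ι = P.complex.d 1 0 := kernel.lift_ι _ _ _
  -- the Hom complex with coefficients in K
  have hK := hv K
  rw [extIso_subsingleton_iff P 1, ← HomologicalComplex.exactAt_iff_isZero_homology,
    HomologicalComplex.exactAt_iff' _ 0 1 2 (by simp) (by simp),
    ShortComplex.moduleCat_exact_iff] at hK
  have hcocycle : ((P.complex.linearYonedaObj R K).d 1 2) u = 0 := by
    show P.complex.d 2 1 ≫ u = 0
    rw [← cancel_mono ι, Category.assoc, hu, HomologicalComplex.d_comp_d, Limits.zero_comp]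
  obtain ⟨(v : P.complex.X 0 ⟶ K), hvu⟩ := hK u hcocycle
  have hvu' : P.complex.d 1 0 ≫ (v : P.complex.X 0 ⟶ K) = u := hvu
  -- the splitting
  let w : P.complex.X 0 ⟶ P.complex.X 0 := 𝟙 _ - (v : P.complex.X 0 ⟶ K) ≫ ι
  have hw : P.complex.d 1 0 ≫ w = 0 := by
    simp only [w, Preadditive.comp_sub, Category.comp_id, ← Category.assoc, hvu', hu]
    simp
  obtain ⟨t, ht0⟩ : { t : N ⟶ P.complex.X 0 // p ≫ t = w } :=
    CokernelCofork.IsColimit.desc' P.isColimitCokernelCofork w hw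
  have ht : p ≫ t = w := by simpa using ht0
  have hsection : t ≫ p = 𝟙 N := by
    rw [← cancel_epi p, ← Category.assoc, ht]
    simp only [w, ι, Preadditive.sub_comp, Category.id_comp, Category.assoc,
      kernel.condition, Limits.comp_zero, sub_zero, Category.comp_id]
  refine ⟨fun g e => ?_⟩
  exact ⟨t ≫ Projective.factorThru (p ≫ g) e, by
    rw [Category.assoc, Projective.factorThru_comp, ← Category.assoc, hsection,
      Category.id_comp]⟩

lemma ext_subsingleton_of_target {M Y : ModuleCat R} [hY : Subsingleton Y] (i : ℕ) :
    Subsingleton (extMod R M Y i) := by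
  obtain ⟨P⟩ : Nonempty (ProjectiveResolution M) := HasProjectiveResolution.out
  rw [extIso_subsingleton_iff P, ← HomologicalComplex.exactAt_iff_isZero_homology,
    HomologicalComplex.exactAt_iff]
  apply ShortComplex.exact_of_isZero_X₂
  have hsub : Subsingleton (P.complex.X i ⟶ Y) := ⟨fun u v => by
    ext x
    exact Subsingleton.elim _ _⟩
  exact @ModuleCat.isZero_of_subsingleton _ _ _ hsub

lemma ext_iso (M : ModuleCat R) {Y Z : ModuleCat R} (e : Y ≅ Z) (i : ℕ)
    (hY : Subsingleton (extMod R M Y i)) : Subsingleton (extMod R M Z i) := by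
  have := ((_root_.Ext R (ModuleCat R) i).obj (Opposite.op M)).mapIso e
  refine subsingleton_of_isZero (((ModuleCat.isZero_of_subsingleton
    (extMod R M Y i)).of_iso this.symm))

lemma ext_pi (M : ModuleCat R) (T : ℕ)
    (hR : ∀ i, 1 ≤ i → i ≤ T → Subsingleton (extMod R M (ModuleCat.of R R) i)) (n : ℕ) :
    ∀ i, 1 ≤ i → i ≤ T → Subsingleton (extMod R M (ModuleCat.of R (Fin n → R)) i) := by
  induction n with
  | zero =>
    intro i h1 hT
    haveI : Subsingleton (Fin 0 → R) := ⟨fun a b => funext fun j => j.elim0⟩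
    exact ext_subsingleton_of_target i
  | succ n ih =>
    intro i h1 hT
    let f : R →ₗ[R] (Fin (n + 1) → R) := LinearMap.single R (fun _ => R) (Fin.last n)
    let g : (Fin (n + 1) → R) →ₗ[R] (Fin n → R) := LinearMap.funLeft R R Fin.castSucc
    have hfg : ∀ x : R, g (f x) = 0 := fun x => funext fun j => by
      simp [f, g, LinearMap.funLeft, Pi.single_eq_of_ne (Fin.castSucc_lt_last j).ne]
    let S : ShortComplex (ModuleCat R) :=
      ShortComplex.mk (X₁ := ModuleCat.of R R) (X₂ := ModuleCat.of R (Fin (n + 1) → R))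
        (X₃ := ModuleCat.of R (Fin n → R)) (ModuleCat.ofHom f) (ModuleCat.ofHom g)
        (by ext x; exact congrFun (hfg 1) x)
    have hS : S.ShortExact := by
      haveI : Mono S.f := by
        rw [ModuleCat.mono_iff_injective]
        intro a b hab
        have := congrFun hab (Fin.last n)
        simpa [S, f] using this
      haveI : Epi S.g := by
        rw [ModuleCat.epi_iff_surjective]
        intro y
        refine ⟨Fin.snoc y 0, funext fun j => ?_⟩
        simp [S, g, LinearMap.funLeft]
      refine ⟨?_⟩
      rw [ShortComplex.moduleCat_exact_iff]
      intro x hx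
      refine ⟨x (Fin.last n), funext fun j => ?_⟩
      refine Fin.lastCases ?_ (fun j => ?_) j
      · simp [S, f]
      · have hxj : x (Fin.castSucc j) = (0 : R) := congrFun hx j
        simp [S, f, Pi.single_eq_of_ne (Fin.castSucc_lt_last j).ne, hxj.symm]
    exact ext_les₂ M hS i (hR i h1 hT) (ih i h1 hT)

lemma key [IsLocalRing R] [IsNoetherianRing R] (M : ModuleCat R) (h : ℕ) :
    ∀ (N : Type) (_ : AddCommGroup N) (_ : Module R N) (_ : Module.Finite R N),
      (∀ j, h < j → ∀ X : ModuleCat R, Subsingleton (extMod R (ModuleCat.of R N) X j)) →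
      ∀ s : ℕ, (∀ j, 1 ≤ j → j ≤ s + h + 1 → Subsingleton (extMod R M (ModuleCat.of R R) j)) →
      ∀ i, 1 ≤ i → i ≤ s + 1 → Subsingleton (extMod R M (ModuleCat.of R N) i) := by
  induction h with
  | zero =>
    intro N iN1 iN2 iN3 hvan s hExt i h1 hs
    haveI hproj : Projective (ModuleCat.of R N) :=
      projective_of_ext_one _ (fun X => hvan 1 Nat.one_pos X)
    haveI : Module.Projective R N := (IsProjective.iff_projective N).mpr hproj
    haveI : Module.FinitePresentation R N := Module.finitePresentation_of_finite R N
    haveI : Module.Free R N := Module.free_of_flat_of_isLocalRing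
    let b := (Module.Free.chooseBasis R N).reindex (Fintype.equivFin _)
    exact ext_iso M b.equivFun.toModuleIso.symm i
      (ext_pi M (s + 0 + 1) hExt _ i h1 (by omega))
  | succ h ih =>
    intro N iN1 iN2 iN3 hvan s hExt i h1 hs
    obtain ⟨n, π, hπ⟩ := Module.Finite.exists_fin' R N
    let K := LinearMap.ker π
    haveI hKfin : Module.Finite R ↥K := by
      haveI : IsNoetherian R (Fin n → R) := inferInstance
      exact Module.Finite.iff_fg.mpr (IsNoetherian.noetherian K)
    let S : ShortComplex (ModuleCat R) :=
      ShortComplex.mk (X₁ := ModuleCat.of R ↥K) (X₂ := ModuleCat.of R (Fin n → R))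
        (X₃ := ModuleCat.of R N) (ModuleCat.ofHom K.subtype) (ModuleCat.ofHom π)
        (by ext x; exact x.2)
    have hS : S.ShortExact := by
      haveI : Mono S.f := by
        rw [ModuleCat.mono_iff_injective]
        exact Subtype.val_injective
      haveI : Epi S.g := by
        rw [ModuleCat.epi_iff_surjective]
        exact hπ
      refine ⟨?_⟩
      rw [ShortComplex.moduleCat_exact_iff]
      intro x hx
      exact ⟨⟨x, hx⟩, rfl⟩
    haveI : Projective S.X₂ := ModuleCat.projective_of_free (Pi.basisFun R (Fin n))
    have hvanK : ∀ j, h < j → ∀ X : ModuleCat R,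
        Subsingleton (extMod R (ModuleCat.of R ↥K) X j) := by
      intro j hj X
      obtain ⟨m, rfl⟩ : ∃ m, j = m + 1 := ⟨j - 1, by omega⟩
      exact ext_shift hS m X (hvan (m + 2) (by omega) X)
    have hK := ih ↥K inferInstance inferInstance hKfin hvanK (s + 1)
      (fun j hj1 hj2 => hExt j hj1 (by omega))
    exact ext_les₃ M hS i
      (ext_pi M (s + (h + 1) + 1) hExt n i h1 (by omega))
      (hK (i + 1) (by omega) (by omega))

end StmtAux

/-- **Lemma (2.3.(2)).** Let `(R,m)` be a Noetherian local ring and `M, N` finitely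
generated `R`-modules with `h = pd_R N < ∞`. If `Ext^i_R(M,R) = 0` for
`1 ≤ i ≤ s + h + 1` for some `s ≥ 0`, then `Ext^i_R(M,N) = 0` for `1 ≤ i ≤ s + 1`. -/
theorem stmt_16 (R : Type) [CommRing R] [IsLocalRing R] [IsNoetherianRing R]
    (M N : Type) [AddCommGroup M] [Module R M] [AddCommGroup N] [Module R N]
    [Module.Finite R M] [Module.Finite R N]
    (h : ℕ) (hpd : pdim R (ModuleCat.of R N) = (h : ℕ∞)) (s : ℕ)
    (hExt : ∀ i : ℕ, 1 ≤ i → i ≤ s + h + 1 →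
      Subsingleton (extMod R (ModuleCat.of R M) (ModuleCat.of R R) i)) :
    ∀ i : ℕ, 1 ≤ i → i ≤ s + 1 →
      Subsingleton (extMod R (ModuleCat.of R M) (ModuleCat.of R N) i) := by
  intro i h1 hs
  have hvan : ∀ j, h < j → ∀ X : ModuleCat R,
      Subsingleton (extMod R (ModuleCat.of R N) X j) := by
    unfold pdim at hpd
    rcases Set.eq_empty_or_nonempty {n : ℕ∞ | ∃ m : ℕ, n = (m : ℕ∞) ∧
        ∀ i : ℕ, m < i → ∀ X : ModuleCat R,
          Subsingleton (extMod R (ModuleCat.of R N) X i)} with he | hne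
    · rw [he, sInf_empty] at hpd
      exact absurd hpd (by simp)
    · have hmem := csInf_mem hne
      rw [hpd] at hmem
      obtain ⟨m, hm, hv⟩ := hmem
      obtain rfl : h = m := by exact_mod_cast hm
      exact hv
  exact StmtAux.key (ModuleCat.of R M) h N inferInstance inferInstance inferInstance
    hvan s hExt i h1 hs
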